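/- For any k ≥ 4 and d ≥ k−1, there exists a group G and a generating set S of G with |S| = d such that |G| = (k−1)(d−k+3)^{k−1} and the Cayley digraph Cay(G,S) has diameter at most k. -/

import Mathlib

open Multiplicative

namespace CayleyFirst

variable (m n : ℕ)

abbrev Vec := Multiplicative (ZMod m → ZMod n)

def shiftφ : Multiplicative (ZMod m) →* MulAut (Vec m n) where
  toFun i :=
    { toFun := fun v => ofAdd (fun x => v.toAdd (x - i.toAdd))
      invFun := fun v => ofAdd (fun x => v.toAdd (x + i.toAdd))
      left_inv := fun v => by
        apply toAdd.injective; funext x; simp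
      right_inv := fun v => by
        apply toAdd.injective; funext x; simp
      map_mul' := fun v w => rfl }
  map_one' := by
    ext v
    simp
  map_mul' := fun i j => by
    ext v
    simp [sub_sub, add_comm]

abbrev Gp := (Vec m n) ⋊[shiftφ m n] Multiplicative (ZMod m)

def gpEquiv : Gp m n ≃ (Vec m n) × Multiplicative (ZMod m) where
  toFun g := (g.left, g.right)
  invFun p := ⟨p.1, p.2⟩
  left_inv g := by cases g; rfl
  right_inv p := rfl

noncomputable instance [NeZero m] [NeZero n] : Fintype (Gp m n) :=
  Fintype.ofEquiv _ (gpEquiv m n).symm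

def e0 (a : ZMod n) : ZMod m → ZMod n := fun x => if x = 0 then a else 0

def sg (a : ZMod n) : Gp m n := ⟨ofAdd (e0 m n a), ofAdd 1⟩

def tg (i : ZMod m) : Gp m n := ⟨1, ofAdd i⟩

lemma sg_zero : sg m n 0 = tg m n 1 := by
  apply SemidirectProduct.ext
  · apply toAdd.injective; funext x; simp [sg, tg, e0]
  · rfl

lemma prod_lemma (v : ZMod m → ZMod n) (j : ℕ) :
    ((List.range j).map (fun t : ℕ => sg m n (v (t : ZMod m)))).prod =
      ⟨ofAdd (fun x => ∑ t ∈ Finset.range j, if x = (t : ZMod m) then v (t : ZMod m) else 0),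
        ofAdd (j : ZMod m)⟩ := by
  induction j with
  | zero =>
    apply SemidirectProduct.ext
    · apply toAdd.injective; funext x; simp
    · simp
  | succ j ih =>
    rw [List.range_succ, List.map_append, List.prod_append, ih, List.map_singleton, List.prod_singleton]
    apply SemidirectProduct.ext
    · apply toAdd.injective
      funext x
      simp only [SemidirectProduct.mul_left, List.map_cons, List.map_nil, List.prod_cons,
        List.prod_nil, mul_one, toAdd_mul, Pi.add_apply, sg, shiftφ]
      erw [SemidirectProduct.mul_left]
      simp only [MonoidHom.coe_mk, OneHom.coe_mk, MulEquiv.coe_mk, Equiv.coe_fn_mk,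
        toAdd_ofAdd, Finset.sum_range_succ, Pi.add_apply]
      congr 1
      simp [e0, sub_eq_zero]
    · simp only [SemidirectProduct.mul_right, List.map_cons, List.map_nil, List.prod_cons,
        List.prod_nil, mul_one, sg]
      rw [← ofAdd_add]
      push_cast
      rfl

lemma sum_indicator [NeZero m] (v : ZMod m → ZMod n) (x : ZMod m) :
    (∑ t ∈ Finset.range m, if x = (t : ZMod m) then v (t : ZMod m) else 0) = v x := by
  rw [Finset.sum_eq_single_of_mem x.val (Finset.mem_range.2 x.val_lt)]
  · simp [ZMod.natCast_val, ZMod.cast_id]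
  · intro t ht hne
    have : x ≠ (t : ZMod m) := by
      intro h
      apply hne
      rw [h, ZMod.val_cast_of_lt (Finset.mem_range.1 ht)]
    simp [this]

lemma tg_injective : Function.Injective (tg m n) := by
  intro i j h
  simpa [tg, SemidirectProduct.ext_iff] using h

lemma sg_injective : Function.Injective (sg m n) := by
  intro a b h
  have := congrArg (fun g : Gp m n => toAdd g.left 0) h
  simpa [sg, e0] using this

end CayleyFirst

theorem cayley_digraph_first_construction (k d : ℕ) (hk : 4 ≤ k) (hd : k - 1 ≤ d) :
    ∃ (G : Type) (_ : Group G) (_ : Fintype G) (S : Finset G),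
      S.card = d ∧
      Nat.card G = (k - 1) * (d + 3 - k) ^ (k - 1) ∧
      Subgroup.closure (S : Set G) = ⊤ ∧
      ∀ g : G, ∃ l : List G, (∀ x ∈ l, x ∈ S) ∧ l.length ≤ k ∧ l.prod = g := by
  classical
  open CayleyFirst in
  set m := k - 1 with hm
  set n := d + 3 - k with hn
  haveI : NeZero m := ⟨by omega⟩
  haveI : NeZero n := ⟨by omega⟩
  refine ⟨Gp m n, inferInstance, inferInstance, ?_⟩
  set S : Finset (Gp m n) :=
    (Finset.univ.image (sg m n)) ∪
      ((Finset.univ.filter (fun i : ZMod m => i ≠ 0 ∧ i ≠ 1)).image (tg m n)) with hS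
  have htg_mem : ∀ i : ZMod m, i ≠ 0 → tg m n i ∈ S := by
    intro i hi
    by_cases h1 : i = 1
    · subst h1
      exact Finset.mem_union_left _ (Finset.mem_image.2 ⟨0, Finset.mem_univ _, sg_zero m n⟩)
    · exact Finset.mem_union_right _
        (Finset.mem_image.2 ⟨i, Finset.mem_filter.2 ⟨Finset.mem_univ _, hi, h1⟩, rfl⟩)
  have hdiam : ∀ g : Gp m n, ∃ l : List (Gp m n),
      (∀ x ∈ l, x ∈ S) ∧ l.length ≤ k ∧ l.prod = g := by
    intro g
    refine ⟨((List.range m).map (fun t : ℕ => sg m n (g.left.toAdd (t : ZMod m)))) ++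
      (if g.right.toAdd = 0 then [] else [tg m n g.right.toAdd]), ?_, ?_, ?_⟩
    · intro x hx
      rcases List.mem_append.1 hx with h | h
      · obtain ⟨t, -, rfl⟩ := List.mem_map.1 h
        exact Finset.mem_union_left _ (Finset.mem_image.2 ⟨_, Finset.mem_univ _, rfl⟩)
      · split_ifs at h with h0
        · simp at h
        · rw [List.mem_singleton] at h
          subst h
          exact htg_mem _ h0
    · rw [List.length_append, List.length_map, List.length_range]
      split_ifs <;> simp <;> omega
    · rw [List.prod_append, prod_lemma]
      have hsum : (fun x => ∑ t ∈ Finset.range m, if x = (t : ZMod m)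
          then g.left.toAdd (t : ZMod m) else 0) = g.left.toAdd :=
        funext (sum_indicator m n g.left.toAdd)
      rw [hsum]
      by_cases h0 : g.right.toAdd = 0
      · have h0' : g.right = 1 := by rw [← ofAdd_toAdd g.right, h0, ofAdd_zero]
        apply SemidirectProduct.ext <;> simp [h0, h0', ZMod.natCast_self]
      · simp only [if_neg h0]
        rw [List.prod_singleton]
        apply SemidirectProduct.ext
        · simp [tg, SemidirectProduct.mul_left, ZMod.natCast_self]
        · simp [tg, SemidirectProduct.mul_right, ZMod.natCast_self]
  have hcard_univ : (Finset.univ : Finset (ZMod m)).card = m := by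
    simp [ZMod.card]
  have hcard_univ_n : (Finset.univ : Finset (ZMod n)).card = n := by
    simp [ZMod.card]
  refine ⟨S, ?_, ?_, ?_, hdiam⟩
  · -- card
    rw [hS, Finset.card_union_of_disjoint, Finset.card_image_of_injective _ (sg_injective m n),
      Finset.card_image_of_injective _ (tg_injective m n)]
    · have hfil : (Finset.univ.filter (fun i : ZMod m => i ≠ 0 ∧ i ≠ 1))
          = Finset.univ \ ({0, 1} : Finset (ZMod m)) := by
        ext i; simp [and_comm]
      have h01 : (0 : ZMod m) ≠ 1 := by
        haveI : Fact (1 < m) := ⟨by omega⟩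
        exact zero_ne_one
      rw [hfil, Finset.card_sdiff_of_subset (Finset.subset_univ _), hcard_univ,
        Finset.card_insert_of_notMem (by simp [h01]), Finset.card_singleton, hcard_univ_n]
      omega
    · rw [Finset.disjoint_left]
      rintro x hx hx'
      obtain ⟨a, -, rfl⟩ := Finset.mem_image.1 hx
      obtain ⟨i, hi, hieq⟩ := Finset.mem_image.1 hx'
      have h2 := congrArg (fun g : Gp m n => g.right) hieq
      simp only [sg, tg] at h2
      have : i = 1 := ofAdd.injective h2
      exact (Finset.mem_filter.1 hi).2.2 this
  · -- order
    have h1 : Nat.card (Gp m n) = Nat.card (Vec m n) * Nat.card (Multiplicative (ZMod m)) := by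
      rw [Nat.card_congr (gpEquiv m n), Nat.card_prod]
    rw [h1, Nat.card_congr (toAdd (α := ZMod m)),
      Nat.card_congr (toAdd (α := ZMod m → ZMod n)), Nat.card_fun,
      Nat.card_zmod, Nat.card_zmod, mul_comm]
  · -- generates
    rw [eq_top_iff]
    rintro g -
    obtain ⟨l, hl, -, hprod⟩ := hdiam g
    exact hprod ▸ Subgroup.list_prod_mem _ (fun x hx => Subgroup.subset_closure (hl x hx))
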